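/- Generalization of Lemma 1 to multiple interferers: if Y = x h + Σ_{j=1}^{m} x'_j h'_j with {h, h'_1, …, h'_m} linearly independent in ℂⁿ (so n ≥ m+1), and x, x'_1, …, x'_m are mutually independent zero-mean with positive variances, then G = E[YY*]⁺ E[Y x̄] satisfies ⟨G, Y⟩ = x almost surely. -/

import Mathlib

open MeasureTheory Matrix Finset
open scoped ComplexConjugate BigOperators

noncomputable section

/-- Hermitian inner product on `Fin n → ℂ`, conjugate-linear in the first slot. -/
def herm {n : ℕ} (G Y : Fin n → ℂ) : ℂ := ∑ i, conj (G i) * Y i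

/-- Squared Euclidean norm. -/
def sqNorm {n : ℕ} (G : Fin n → ℂ) : ℝ := ∑ i, ‖G i‖ ^ 2

/-- The four Penrose conditions: `Rp` is the Moore–Penrose pseudoinverse of `R`. -/
def IsPinv {n : ℕ} (R Rp : Matrix (Fin n) (Fin n) ℂ) : Prop :=
  R * Rp * R = R ∧ Rp * R * Rp = Rp ∧ (R * Rp)ᴴ = R * Rp ∧ (Rp * R)ᴴ = Rp * R

/-- Mean square error `E[|⟨G,Y⟩ − X|²]`. -/
def mse {n : ℕ} {Ω : Type} [MeasurableSpace Ω] (μ : Measure Ω)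
    (Y : Ω → Fin n → ℂ) (X : Ω → ℂ) (G : Fin n → ℂ) : ℝ :=
  ∫ ω, ‖herm G (Y ω) - X ω‖ ^ 2 ∂μ

/-- Second-moment matrix `R = E[Y Y*]`. -/
def secondMoment {n : ℕ} {Ω : Type} [MeasurableSpace Ω] (μ : Measure Ω)
    (Y : Ω → Fin n → ℂ) : Matrix (Fin n) (Fin n) ℂ :=
  Matrix.of fun i j => ∫ ω, Y ω i * conj (Y ω j) ∂μ

/-- Cross-correlation vector `r = E[Y conj(X)]`. -/
def crossCorr {n : ℕ} {Ω : Type} [MeasurableSpace Ω] (μ : Measure Ω)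
    (Y : Ω → Fin n → ℂ) (X : Ω → ℂ) : Fin n → ℂ :=
  fun i => ∫ ω, Y ω i * conj (X ω) ∂μ

lemma integrable_conj' {Ω : Type} [MeasurableSpace Ω] {μ : Measure Ω} {f : Ω → ℂ}
    (hf : Integrable f μ) : Integrable (fun ω => conj (f ω)) μ := by
  refine ⟨Complex.continuous_conj.comp_aestronglyMeasurable hf.1, ?_⟩
  simpa [HasFiniteIntegral] using hf.2

lemma indep_integral_mul_complex {Ω : Type} [MeasurableSpace Ω] {μ : Measure Ω}
    {X Y : Ω → ℂ} (hXY : ProbabilityTheory.IndepFun X Y μ)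
    (hX : Integrable X μ) (hY : Integrable Y μ) :
    ∫ ω, X ω * Y ω ∂μ = (∫ ω, X ω ∂μ) * ∫ ω, Y ω ∂μ := by
  have hre : ProbabilityTheory.IndepFun (fun ω => (X ω).re) (fun ω => (Y ω).re) μ :=
    hXY.comp Complex.measurable_re Complex.measurable_re
  have hri : ProbabilityTheory.IndepFun (fun ω => (X ω).re) (fun ω => (Y ω).im) μ :=
    hXY.comp Complex.measurable_re Complex.measurable_im
  have hir : ProbabilityTheory.IndepFun (fun ω => (X ω).im) (fun ω => (Y ω).re) μ :=
    hXY.comp Complex.measurable_im Complex.measurable_re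
  have hii : ProbabilityTheory.IndepFun (fun ω => (X ω).im) (fun ω => (Y ω).im) μ :=
    hXY.comp Complex.measurable_im Complex.measurable_im
  have hXr : Integrable (fun ω => (X ω).re) μ := hX.re
  have hXi : Integrable (fun ω => (X ω).im) μ := hX.im
  have hYr : Integrable (fun ω => (Y ω).re) μ := hY.re
  have hYi : Integrable (fun ω => (Y ω).im) μ := hY.im
  have hprr : ∫ ω, (X ω).re * (Y ω).re ∂μ = (∫ ω, (X ω).re ∂μ) * ∫ ω, (Y ω).re ∂μ := hre.integral_fun_mul_eq_mul_integral hXr.1 hYr.1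
  have hpri : ∫ ω, (X ω).re * (Y ω).im ∂μ = (∫ ω, (X ω).re ∂μ) * ∫ ω, (Y ω).im ∂μ := hri.integral_fun_mul_eq_mul_integral hXr.1 hYi.1
  have hpir : ∫ ω, (X ω).im * (Y ω).re ∂μ = (∫ ω, (X ω).im ∂μ) * ∫ ω, (Y ω).re ∂μ := hir.integral_fun_mul_eq_mul_integral hXi.1 hYr.1
  have hpii : ∫ ω, (X ω).im * (Y ω).im ∂μ = (∫ ω, (X ω).im ∂μ) * ∫ ω, (Y ω).im ∂μ := hii.integral_fun_mul_eq_mul_integral hXi.1 hYi.1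
  have irr : Integrable (fun ω => (X ω).re * (Y ω).re) μ := hre.integrable_mul hXr hYr
  have iri : Integrable (fun ω => (X ω).re * (Y ω).im) μ := hri.integrable_mul hXr hYi
  have iir : Integrable (fun ω => (X ω).im * (Y ω).re) μ := hir.integrable_mul hXi hYr
  have iii : Integrable (fun ω => (X ω).im * (Y ω).im) μ := hii.integrable_mul hXi hYi
  have hXYint : Integrable (fun ω => X ω * Y ω) μ := hXY.integrable_mul hX hY
  have hXre : (∫ ω, X ω ∂μ).re = ∫ ω, (X ω).re ∂μ := by simpa using (integral_re hX).symm
  have hXim : (∫ ω, X ω ∂μ).im = ∫ ω, (X ω).im ∂μ := by simpa using (integral_im hX).symm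
  have hYre : (∫ ω, Y ω ∂μ).re = ∫ ω, (Y ω).re ∂μ := by simpa using (integral_re hY).symm
  have hYim : (∫ ω, Y ω ∂μ).im = ∫ ω, (Y ω).im ∂μ := by simpa using (integral_im hY).symm
  apply Complex.ext
  · have h1 : (∫ ω, X ω * Y ω ∂μ).re = ∫ ω, (X ω * Y ω).re ∂μ := by
      simpa using (integral_re hXYint).symm
    rw [h1]
    simp only [Complex.mul_re]
    rw [integral_sub irr iii, hprr, hpii, hXre, hXim, hYre, hYim]
  · have h1 : (∫ ω, X ω * Y ω ∂μ).im = ∫ ω, (X ω * Y ω).im ∂μ := by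
      simpa using (integral_im hXYint).symm
    rw [h1]
    simp only [Complex.mul_im]
    rw [integral_add iri iir, hpri, hpir, hXre, hXim, hYre, hYim]

lemma exists_dual_vec {N M : ℕ} {v : Fin M → Fin N → ℂ}
    (hv : LinearIndependent ℂ v) (k0 : Fin M) :
    ∃ u : Fin N → ℂ, ∀ k, (∑ i, conj (v k i) * u i) = if k = k0 then 1 else 0 := by
  classical
  obtain ⟨q, hq⟩ := Submodule.exists_isCompl (Submodule.span ℂ (Set.range v))
  let b := Module.Basis.span hv
  let p := (Submodule.span ℂ (Set.range v)).projectionOnto q hq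
  let φ : (Fin N → ℂ) →ₗ[ℂ] ℂ := (b.coord k0) ∘ₗ p
  have hφ : ∀ k, φ (v k) = if k = k0 then 1 else 0 := by
    intro k
    have hm : v k ∈ Submodule.span ℂ (Set.range v) := Submodule.subset_span ⟨k, rfl⟩
    have h1 : p (v k) = b k := by
      have h2 : (b k : Fin N → ℂ) = v k := congrArg Subtype.val (Module.Basis.span_apply hv k)
      have h3 : p ((b k : Fin N → ℂ)) = b k :=
        Submodule.projectionOnto_apply_left hq (b k)
      rw [← h2, h3]
    show b.coord k0 (p (v k)) = _
    rw [h1, Module.Basis.coord_apply, b.repr_self, Finsupp.single_apply]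
  refine ⟨fun i => conj (φ (fun j => if i = j then 1 else 0)), fun k => ?_⟩
  have hrep : (v k : Fin N → ℂ) = ∑ i, v k i • (fun j => if i = j then 1 else 0 : Fin N → ℂ) :=
    pi_eq_sum_univ (v k)
  have : ∑ i, conj (v k i) * conj (φ (fun j => if i = j then 1 else 0))
      = conj (φ (v k)) := by
    conv_rhs => rw [hrep]
    rw [map_sum φ, map_sum (starRingEnd ℂ)]
    refine Finset.sum_congr rfl fun i _ => ?_
    rw [φ.map_smul, smul_eq_mul, _root_.map_mul]
  rw [this, hφ k]
  split <;> simp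

theorem bic_perfect_recovery_multi {n m : ℕ} (hn : m + 1 ≤ n)
    {Ω : Type} [MeasurableSpace Ω] (μ : Measure Ω) [IsProbabilityMeasure μ]
    (h : Fin n → ℂ) (h' : Fin m → Fin n → ℂ)
    (hli : LinearIndependent ℂ (Fin.cons h h' : Fin (m + 1) → Fin n → ℂ))
    (x : Ω → ℂ) (x' : Fin m → Ω → ℂ)
    (hx2 : MemLp x 2 μ) (hx'2 : ∀ j, MemLp (x' j) 2 μ)
    (hindep : ProbabilityTheory.iIndepFun
      (Fin.cons x x' : Fin (m + 1) → Ω → ℂ) μ)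
    (hmx : ∫ ω, x ω ∂μ = 0) (hmx' : ∀ j, ∫ ω, x' j ω ∂μ = 0)
    (hvx : 0 < ∫ ω, ‖x ω‖ ^ 2 ∂μ) (hvx' : ∀ j, 0 < ∫ ω, ‖x' j ω‖ ^ 2 ∂μ)
    (Y : Ω → Fin n → ℂ) (hYdef : ∀ ω, Y ω = x ω • h + ∑ j, x' j ω • h' j)
    (Rp : Matrix (Fin n) (Fin n) ℂ) (hRp : IsPinv (secondMoment μ Y) Rp) :
    ∀ᵐ ω ∂μ, herm (Rp.mulVec (crossCorr μ Y x)) (Y ω) = x ω := by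
  classical
  set v : Fin (m + 1) → Fin n → ℂ := Fin.cons h h' with hv
  set z : Fin (m + 1) → Ω → ℂ := Fin.cons x x' with hzd
  have hz2 : ∀ k, MemLp (z k) 2 μ := by
    intro k
    induction k using Fin.cases with
    | zero => simpa [hzd] using hx2
    | succ j => simpa [hzd] using hx'2 j
  have hzint : ∀ k, Integrable (z k) μ := fun k => (hz2 k).integrable one_le_two
  have hmz : ∀ k, ∫ ω, z k ω ∂μ = 0 := by
    intro k
    induction k using Fin.cases with
    | zero => simpa [hzd] using hmx
    | succ j => simpa [hzd] using hmx' j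
  set σ : Fin (m + 1) → ℝ := fun k => ∫ ω, ‖z k ω‖ ^ 2 ∂μ with hσd
  have hσpos : ∀ k, 0 < σ k := by
    intro k
    induction k using Fin.cases with
    | zero => simpa [hσd, hzd] using hvx
    | succ j => simpa [hσd, hzd] using hvx' j
  have hYz : ∀ ω i, Y ω i = ∑ k, z k ω * v k i := by
    intro ω i
    rw [hYdef]
    simp [Fin.sum_univ_succ, hv, hzd, Finset.sum_apply]
  have hintz : ∀ k l, Integrable (fun ω => z k ω * conj (z l ω)) μ := by
    intro k l
    have h1 := L2.integrable_inner (𝕜 := ℂ) ((hz2 l).toLp _) ((hz2 k).toLp _)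
    refine h1.congr ?_
    filter_upwards [(hz2 l).coeFn_toLp, (hz2 k).coeFn_toLp] with ω e1 e2
    rw [RCLike.inner_apply, e1, e2]
  have hcross : ∀ k l, ∫ ω, z k ω * conj (z l ω) ∂μ = if k = l then (σ k : ℂ) else 0 := by
    intro k l
    rcases eq_or_ne k l with rfl | hkl
    · rw [if_pos rfl]
      have he : ∀ ω, z k ω * conj (z k ω) = ((‖z k ω‖ ^ 2 : ℝ) : ℂ) := by
        intro ω
        rw [Complex.mul_conj]
        norm_cast
        simp [Complex.normSq_eq_norm_sq]
      simp_rw [he]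
      exact integral_ofReal
    · rw [if_neg hkl]
      have hind : ProbabilityTheory.IndepFun (z k) (fun ω => conj (z l ω)) μ := by
        have := (hindep.indepFun hkl).comp measurable_id
          (Complex.continuous_conj.measurable)
        exact this
      rw [indep_integral_mul_complex hind (hzint k) (integrable_conj' (hzint l)),
        hmz k, zero_mul]
  have hR : ∀ i j, secondMoment μ Y i j = ∑ k, (σ k : ℂ) * (v k i * conj (v k j)) := by
    intro i j
    have he : ∀ ω, Y ω i * conj (Y ω j)
        = ∑ k, ∑ l, (z k ω * conj (z l ω)) * (v k i * conj (v l j)) := by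
      intro ω
      rw [hYz, hYz, map_sum (starRingEnd ℂ), Finset.sum_mul_sum]
      refine Finset.sum_congr rfl fun k _ => Finset.sum_congr rfl fun l _ => ?_
      rw [_root_.map_mul]
      ring
    show (∫ ω, Y ω i * conj (Y ω j) ∂μ) = _
    simp_rw [he]
    rw [integral_finset_sum]
    · have : ∀ k : Fin (m + 1),
          (∫ ω, ∑ l, (z k ω * conj (z l ω)) * (v k i * conj (v l j)) ∂μ)
            = ∑ l, (if k = l then (σ k : ℂ) else 0) * (v k i * conj (v l j)) := by
        intro k
        rw [integral_finset_sum]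
        · exact Finset.sum_congr rfl fun l _ => by
            rw [integral_mul_const, hcross]
        · exact fun l _ => (hintz k l).mul_const _
      simp_rw [this]
      refine Finset.sum_congr rfl fun k _ => ?_
      simp [ite_mul, Finset.sum_ite_eq, Finset.mem_univ]
    · exact fun k _ => integrable_finset_sum _ fun l _ => (hintz k l).mul_const _
  have hr : ∀ i, crossCorr μ Y x i = (σ 0 : ℂ) * v 0 i := by
    intro i
    have hx0 : ∀ ω, x ω = z 0 ω := fun ω => by simp [hzd]
    have he : ∀ ω, Y ω i * conj (x ω) = ∑ k, (z k ω * conj (z 0 ω)) * v k i := by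
      intro ω
      rw [hYz, hx0, Finset.sum_mul]
      refine Finset.sum_congr rfl fun k _ => by ring
    show (∫ ω, Y ω i * conj (x ω) ∂μ) = _
    simp_rw [he]
    rw [integral_finset_sum]
    · have : ∀ k : Fin (m + 1),
          (∫ ω, (z k ω * conj (z 0 ω)) * v k i ∂μ)
            = (if k = 0 then (σ k : ℂ) else 0) * v k i := by
        intro k
        rw [integral_mul_const, hcross]
      simp_rw [this]
      simp [ite_mul, Finset.sum_ite_eq, Finset.mem_univ]
    · exact fun k _ => (hintz k 0).mul_const _
  have hmul : ∀ (w : Fin n → ℂ) (i : Fin n), (secondMoment μ Y).mulVec w i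
      = ∑ k, (σ k : ℂ) * (∑ j, conj (v k j) * w j) * v k i := by
    intro w i
    simp only [Matrix.mulVec, dotProduct]
    simp_rw [hR, Finset.sum_mul]
    rw [Finset.sum_comm]
    refine Finset.sum_congr rfl fun k _ => ?_
    rw [Finset.mul_sum, Finset.sum_mul]
    refine Finset.sum_congr rfl fun j' _ => by ring
  obtain ⟨u, hu⟩ := exists_dual_vec hli (0 : Fin (m + 1))
  have hru : (secondMoment μ Y).mulVec u = crossCorr μ Y x := by
    funext i
    rw [hmul, hr]
    simp_rw [hu]
    simp [mul_ite, ite_mul, Finset.sum_ite_eq, Finset.mem_univ]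
  obtain ⟨hP1, -, -, -⟩ := hRp
  have hRG : (secondMoment μ Y).mulVec (Rp.mulVec (crossCorr μ Y x)) = crossCorr μ Y x := by
    conv_lhs => rw [← hru]
    rw [Matrix.mulVec_mulVec, Matrix.mulVec_mulVec, hP1, hru]
  set G : Fin n → ℂ := Rp.mulVec (crossCorr μ Y x) with hGd
  have hcoef : ∀ k, (∑ j, conj (v k j) * G j) = if k = 0 then 1 else 0 := by
    have h0 : ∀ g : Fin (m + 1) → ℂ, (∀ i, ∑ k, g k * v k i = 0) → ∀ k, g k = 0 := by
      intro g hg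
      refine Fintype.linearIndependent_iff.mp hli g ?_
      funext i
      simpa [Finset.sum_apply, smul_eq_mul] using hg i
    have hsum : ∀ i, ∑ k, ((σ k : ℂ) * (∑ j, conj (v k j) * G j)
        - (if k = 0 then (σ 0 : ℂ) else 0)) * v k i = 0 := by
      intro i
      simp_rw [sub_mul, Finset.sum_sub_distrib]
      have h1 : ∑ k, (σ k : ℂ) * (∑ j, conj (v k j) * G j) * v k i
          = (σ 0 : ℂ) * v 0 i := by
        rw [← hmul, hRG, hr]
      rw [h1]
      simp [ite_mul, Finset.sum_ite_eq, Finset.mem_univ]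
    have hz0 := h0 _ hsum
    intro k
    have hk := hz0 k
    have hσne : (σ k : ℂ) ≠ 0 := by
      exact_mod_cast ne_of_gt (hσpos k)
    rcases eq_or_ne k 0 with rfl | hk0
    · rw [if_pos rfl]
      have : (σ 0 : ℂ) * (∑ j, conj (v 0 j) * G j) = (σ 0 : ℂ) * 1 := by
        rw [mul_one]
        simpa [sub_eq_zero] using hk
      exact mul_left_cancel₀ hσne this
    · rw [if_neg hk0]
      have : (σ k : ℂ) * (∑ j, conj (v k j) * G j) = (σ k : ℂ) * 0 := by
        rw [mul_zero]
        simpa [hk0, sub_eq_zero] using hk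
      exact mul_left_cancel₀ hσne this
  refine Filter.Eventually.of_forall fun ω => ?_
  have hherm : herm G (Y ω) = ∑ k, z k ω * conj (∑ j, conj (v k j) * G j) := by
    rw [herm]
    simp_rw [hYz, Finset.mul_sum]
    rw [Finset.sum_comm]
    refine Finset.sum_congr rfl fun k _ => ?_
    rw [map_sum (starRingEnd ℂ), Finset.mul_sum]
    refine Finset.sum_congr rfl fun j _ => ?_
    simp only [_root_.map_mul, Complex.conj_conj]
    ring
  rw [hherm]
  simp_rw [hcoef]
  have hx0 : x ω = z 0 ω := by simp [hzd]
  rw [hx0]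
  simp [apply_ite (starRingEnd ℂ), mul_ite, Finset.sum_ite_eq, Finset.mem_univ]
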